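/- For any polynomial p : P* → P in a category E with finite limits, the polynomial endofunctor P(p) = Σ_! ∘ Π_p ∘ Δ_! : E → E preserves connected limits. -/

import Mathlib

open CategoryTheory Limits

universe w w' v u

/-- The functor `Δ_! : E ⥤ E/P*`, `X ↦ (X ⨯ P* → P*)`. -/
@[simps]
noncomputable def deltaBangC {E : Type u} [Category.{v} E] [HasFiniteLimits E] (Pstar : E) :
    E ⥤ Over Pstar where
  obj X := Over.mk (prod.snd : X ⨯ Pstar ⟶ Pstar)
  map f := Over.homMk (prod.map f (𝟙 _))

/-- `deltaBangC` is isomorphic to `Over.star`, hence a right adjoint. -/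
noncomputable def deltaBangCIsoStar {E : Type u} [Category.{v} E] [HasFiniteLimits E] (Pstar : E) :
    deltaBangC Pstar ≅ Over.star Pstar :=
  NatIso.ofComponents
    (fun X => Over.isoMk (prod.braiding X Pstar) (by simp; erw [prod.lift_fst, prod.lift_fst]; rfl))
    (fun f => by
      ext
      simp [prod.braiding]
      change prod.map f (𝟙 Pstar) ≫ prod.lift prod.snd prod.fst = prod.lift prod.snd prod.fst ≫ prod.map (𝟙 Pstar) f
      apply prod.hom_ext <;> simp)

/-- The forgetful functor `Over B ⥤ C` preserves connected limits. -/
noncomputable def overForgetPreservesConnectedLimits {C : Type u} [Category.{v} C] (B : C)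
    {J : Type w} [Category.{w'} J] [IsConnected J] :
    PreservesLimitsOfShape J (Over.forget B) where
  preservesLimit {F} := ⟨fun {c} t => ⟨{
    lift := fun s => (t.lift (CostructuredArrow.CreatesConnected.raiseCone s)).left
    fac := fun s j =>
      congrArg CommaMorphism.left (t.fac (CostructuredArrow.CreatesConnected.raiseCone s) j)
    uniq := fun s m h => by
      have hm : m ≫ c.pt.hom =
          (CostructuredArrow.CreatesConnected.raiseCone s).pt.hom := by
        have hw : (c.π.app (Classical.arbitrary J)).left ≫
            (F.obj (Classical.arbitrary J)).hom = c.pt.hom :=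
          Over.w (c.π.app (Classical.arbitrary J))
        dsimp [CostructuredArrow.CreatesConnected.raiseCone]
        rw [← hw]
        refine (Category.assoc _ _ _).symm.trans ?_
        exact congrArg (· ≫ (F.obj (Classical.arbitrary J)).hom) (h (Classical.arbitrary J))
      have : Over.homMk (U := (CostructuredArrow.CreatesConnected.raiseCone s).pt) m hm = 
          t.lift (CostructuredArrow.CreatesConnected.raiseCone s) := by
        apply t.uniq (CostructuredArrow.CreatesConnected.raiseCone s)
        intro j
        ext
        exact h j
      exact congrArg CommaMorphism.left this }⟩⟩

/-- For any polynomial `p : P* ⟶ P` in a category `E` with finite limits (with `Π_p` a right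
adjoint to pullback along `p`), the polynomial endofunctor
`P(p) = Σ_! ∘ Π_p ∘ Δ_! : E ⥤ E` preserves connected limits. -/
theorem polyEndofunctor_preserves_connected_limits
    {E : Type u} [Category.{v} E] [HasFiniteLimits E] {Pstar P : E} (p : Pstar ⟶ P)
    (Pi : Over Pstar ⥤ Over P) (adj : Over.pullback p ⊣ Pi)
    (J : Type w) [Category.{w'} J] [IsConnected J] :
    Nonempty (PreservesLimitsOfShape J (deltaBangC Pstar ⋙ Pi ⋙ Over.forget P)) := by
  have h1 : PreservesLimitsOfShape J (Over.star Pstar) :=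
    ((Over.forgetAdjStar Pstar).rightAdjoint_preservesLimits).preservesLimitsOfShape
  have h0 : PreservesLimitsOfShape J (deltaBangC Pstar) :=
    preservesLimitsOfShape_of_natIso (deltaBangCIsoStar Pstar).symm
  have h2 : PreservesLimitsOfShape J Pi :=
    (adj.rightAdjoint_preservesLimits).preservesLimitsOfShape
  have h3 : PreservesLimitsOfShape J (Over.forget P) :=
    overForgetPreservesConnectedLimits P
  exact ⟨comp_preservesLimitsOfShape _ _⟩
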